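/- arXiv:0704.2849 — 2 statements merged into one kernel-verified Lean document; each statement's English description precedes it below -/
import Mathlib

section
/- For a compact set X ⊆ ℂⁿ on which no nonzero polynomial vanishes identically, and for fixed M ≥ 1 and degree d, the extremal quantity λ_d := sup{|P(0)| : P polynomial of degree ≤ d, sup_X |P| ≤ 1} satisfies λ_d ≥ M^d if and only if there exist polynomials A_1, …, A_n with ζ₁A₁(ζ) + ⋯ + ζₙAₙ(ζ) of degree ≤ d and |1 - ∑_k ζ_k A_k(ζ)| ≤ M^{-d} for all ζ ∈ X. -/
open MvPolynomial

/-- For a compact non-algebraic set S ⊆ ℂⁿ, M ≥ 1 and a fixed degree d,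
λ_d = sup{|P(0)| : deg P ≤ d, sup_S |P| ≤ 1} satisfies λ_d ≥ M^d iff there
exist polynomials A₁,…,Aₙ with ∑ ζ_k A_k of degree ≤ d and
|1 - ∑ ζ_k A_k(ζ)| ≤ M^{-d} on S. -/
theorem stmt_3 (n d : ℕ) (S : Set (Fin n → ℂ)) (hS : IsCompact S)
    (hna : ∀ P : MvPolynomial (Fin n) ℂ, (∀ z ∈ S, eval z P = 0) → P = 0)
    (M : ℝ) (hM : 1 ≤ M) :
    M ^ d ≤ sSup {r : ℝ | ∃ P : MvPolynomial (Fin n) ℂ,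
        P.totalDegree ≤ d ∧ (∀ z ∈ S, ‖eval z P‖ ≤ 1) ∧
        r = ‖eval (fun _ => (0 : ℂ)) P‖}
      ↔ ∃ A : Fin n → MvPolynomial (Fin n) ℂ,
          (∑ k, MvPolynomial.X k * A k).totalDegree ≤ d ∧
          ∀ z ∈ S, ‖1 - ∑ k, z k * eval z (A k)‖ ≤ 1 / M ^ d := by
  classical
  have hSne : S.Nonempty := by
    by_contra h
    rw [Set.not_nonempty_iff_eq_empty] at h
    exact one_ne_zero (hna 1 (by simp [h]))
  have hMd : (0:ℝ) < M ^ d := pow_pos (lt_of_lt_of_le one_pos hM) d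
  -- the sup norm over S
  set N : MvPolynomial (Fin n) ℂ → ℝ := fun p => sSup ((fun z => ‖eval z p‖) '' S) with hNdef
  have hbdd : ∀ p : MvPolynomial (Fin n) ℂ, BddAbove ((fun z => ‖eval z p‖) '' S) :=
    fun p => (hS.image ((MvPolynomial.continuous_eval (p := p)).norm)).bddAbove
  have hle : ∀ p : MvPolynomial (Fin n) ℂ, ∀ z ∈ S, ‖eval z p‖ ≤ N p := fun p z hz =>
    le_csSup (hbdd p) ⟨z, hz, rfl⟩
  have hN_le : ∀ (p : MvPolynomial (Fin n) ℂ) (c : ℝ), (∀ z ∈ S, ‖eval z p‖ ≤ c) → N p ≤ c :=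
    fun p c h => csSup_le (hSne.image _) (by rintro r ⟨z, hz, rfl⟩; exact h z hz)
  set V := restrictTotalDegree (Fin n) ℂ d with hVdef
  let Ng : AddGroupNorm V :=
    { toFun := fun p => N p.1
      map_zero' := le_antisymm (hN_le 0 0 (by simp)) (by
        obtain ⟨z, hz⟩ := hSne
        exact le_trans (norm_nonneg (eval z (0 : MvPolynomial (Fin n) ℂ))) (hle 0 z hz))
      add_le' := fun p q => hN_le _ _ (fun z hz => by
        calc ‖eval z ((p + q : V) : MvPolynomial (Fin n) ℂ)‖
            ≤ ‖eval z (p : MvPolynomial (Fin n) ℂ)‖ + ‖eval z (q : MvPolynomial (Fin n) ℂ)‖ := by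
              rw [Submodule.coe_add, map_add]; exact norm_add_le _ _
          _ ≤ N p.1 + N q.1 := add_le_add (hle _ z hz) (hle _ z hz))
      neg' := fun p => by
        show N (↑(-p)) = N p.1
        have hco : ((-p : V) : MvPolynomial (Fin n) ℂ) = -(p : MvPolynomial (Fin n) ℂ) := rfl
        rw [hNdef]
        simp only [hco, map_neg, norm_neg]
      eq_zero_of_map_eq_zero' := fun p hp => by
        have h0 : ∀ z ∈ S, eval z (p : MvPolynomial (Fin n) ℂ) = 0 := fun z hz =>
          norm_eq_zero.mp (le_antisymm (le_trans (hle _ z hz) (le_of_eq hp)) (norm_nonneg _))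
        exact Subtype.ext (hna p.1 h0) }
  letI : NormedAddCommGroup V := Ng.toNormedAddCommGroup
  letI : PseudoMetricSpace V := Ng.toNormedAddCommGroup.toPseudoMetricSpace
  letI : UniformSpace V := PseudoMetricSpace.toUniformSpace
  letI : TopologicalSpace V := UniformSpace.toTopologicalSpace
  letI : NormedSpace ℂ V := by
    refine ⟨fun c p => ?_⟩
    show N (↑(c • p)) ≤ ‖c‖ * N p.1
    refine hN_le _ _ (fun z hz => ?_)
    rw [Submodule.coe_smul, smul_eval, norm_mul]
    exact mul_le_mul_of_nonneg_left (hle _ z hz) (norm_nonneg c)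
  letI : ProperSpace V := FiniteDimensional.proper ℂ V
  have hnorm_eq : ∀ p : V, ‖p‖ = N p.1 := fun p => rfl
  -- evaluation at 0
  let φ : V →ₗ[ℂ] ℂ :=
    { toFun := fun p => eval (fun _ => (0:ℂ)) (p : MvPolynomial (Fin n) ℂ)
      map_add' := fun p q => by simp only [Submodule.coe_add, map_add]
      map_smul' := fun c p => by simp only [Submodule.coe_smul, smul_eval]; rfl }
  have hf : Continuous fun p : V => ‖φ p‖ := φ.continuous_of_finiteDimensional.norm
  have hball : IsCompact (Metric.closedBall (0:V) 1) := isCompact_closedBall _ _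
  obtain ⟨P₀, hP₀mem, hP₀max⟩ :=
    hball.exists_isMaxOn ⟨0, Metric.mem_closedBall_self zero_le_one⟩ hf.continuousOn
  have hmem_ball : ∀ p : V, p ∈ Metric.closedBall (0:V) 1 ↔ N p.1 ≤ 1 := fun p => by
    rw [Metric.mem_closedBall, dist_zero_right, hnorm_eq]
  -- the set in question is the image of the ball
  have hTeq : {r : ℝ | ∃ P : MvPolynomial (Fin n) ℂ,
        P.totalDegree ≤ d ∧ (∀ z ∈ S, ‖eval z P‖ ≤ 1) ∧
        r = ‖eval (fun _ => (0 : ℂ)) P‖}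
      = (fun p : V => ‖φ p‖) '' (Metric.closedBall (0:V) 1) := by
    ext r
    constructor
    · rintro ⟨P, hdeg, hb, rfl⟩
      refine ⟨⟨P, (MvPolynomial.mem_restrictTotalDegree _ _ _).mpr hdeg⟩,
        (hmem_ball _).mpr (hN_le _ _ hb), rfl⟩
    · rintro ⟨p, hp, rfl⟩
      exact ⟨p.1, (MvPolynomial.mem_restrictTotalDegree _ _ _).mp p.2,
        fun z hz => le_trans (hle _ z hz) ((hmem_ball _).mp hp), rfl⟩
  have hsup : sSup {r : ℝ | ∃ P : MvPolynomial (Fin n) ℂ,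
        P.totalDegree ≤ d ∧ (∀ z ∈ S, ‖eval z P‖ ≤ 1) ∧
        r = ‖eval (fun _ => (0 : ℂ)) P‖} = ‖φ P₀‖ := by
    rw [hTeq]
    exact IsGreatest.csSup_eq ⟨⟨P₀, hP₀mem, rfl⟩, by rintro r ⟨p, hp, rfl⟩; exact hP₀max hp⟩
  rw [hsup]
  constructor
  · -- forward direction
    intro h
    set c : ℂ := eval (fun _ => (0:ℂ)) (P₀ : MvPolynomial (Fin n) ℂ) with hc
    have hφP₀ : φ P₀ = c := rfl
    have hcnorm : M ^ d ≤ ‖c‖ := by rwa [hφP₀] at h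
    have hc0 : c ≠ 0 := by
      intro h0
      rw [h0, norm_zero] at hcnorm
      exact absurd (lt_of_lt_of_le hMd hcnorm) (lt_irrefl 0)
    -- p := C c - P₀ has zero constant term
    set p : MvPolynomial (Fin n) ℂ := C c - (P₀ : MvPolynomial (Fin n) ℂ) with hpdef
    have hcoeff : coeff 0 p = 0 := by
      rw [hpdef, coeff_sub, coeff_zero_C, ← constantCoeff_eq, ← eval_zero', ← hc, sub_self]
    have hpmem : p ∈ Ideal.span (MvPolynomial.X '' (Set.univ : Set (Fin n)) :
        Set (MvPolynomial (Fin n) ℂ)) := by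
      rw [MvPolynomial.mem_ideal_span_X_image]
      intro m hm
      by_contra hcon
      push_neg at hcon
      have hm0 : m = 0 := Finsupp.ext fun i => hcon i (Set.mem_univ i)
      rw [hm0] at hm
      exact (mem_support_iff.mp hm) hcoeff
    rw [Set.image_univ] at hpmem
    have hpmem' : p ∈ Submodule.span (MvPolynomial (Fin n) ℂ) (Set.range MvPolynomial.X) := hpmem
    obtain ⟨B, hB⟩ := (Submodule.mem_span_range_iff_exists_fun (MvPolynomial (Fin n) ℂ)).mp hpmem'
    refine ⟨fun k => C c⁻¹ * B k, ?_, ?_⟩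
    · have hsum : (∑ k, MvPolynomial.X k * (C c⁻¹ * B k)) = C c⁻¹ * p := by
        rw [← hB, Finset.mul_sum]
        congr 1
        ext k
        rw [smul_eq_mul]
        ring
      rw [hsum]
      calc (C c⁻¹ * p).totalDegree ≤ (C c⁻¹).totalDegree + p.totalDegree :=
            totalDegree_mul _ _
        _ = p.totalDegree := by rw [totalDegree_C, zero_add]
        _ ≤ (P₀ : MvPolynomial (Fin n) ℂ).totalDegree := by
            rw [hpdef]
            exact le_trans (totalDegree_sub _ _) (by rw [totalDegree_C]; simp)
        _ ≤ d := (MvPolynomial.mem_restrictTotalDegree _ _ _).mp P₀.2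
    · intro z hz
      have hevalsum : (∑ k, z k * eval z (C c⁻¹ * B k))
          = c⁻¹ * eval z p := by
        rw [← hB]
        rw [map_sum, Finset.mul_sum]
        congr 1
        ext k
        rw [smul_eq_mul, eval_mul, eval_mul, eval_C, eval_X]
        ring
      have key : (1 : ℂ) - ∑ k, z k * eval z (C c⁻¹ * B k)
          = c⁻¹ * eval z (P₀ : MvPolynomial (Fin n) ℂ) := by
        rw [hevalsum, hpdef, map_sub, eval_C, mul_sub, inv_mul_cancel₀ hc0]
        ring
      rw [key, norm_mul, norm_inv]
      have h1 : ‖eval z (P₀ : MvPolynomial (Fin n) ℂ)‖ ≤ 1 :=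
        le_trans (hle _ z hz) ((hmem_ball _).mp hP₀mem)
      have h2 : (0:ℝ) < ‖c‖ := lt_of_lt_of_le hMd hcnorm
      calc ‖c‖⁻¹ * ‖eval z (P₀ : MvPolynomial (Fin n) ℂ)‖ ≤ ‖c‖⁻¹ * 1 :=
            mul_le_mul_of_nonneg_left h1 (inv_nonneg.mpr (le_of_lt h2))
        _ = ‖c‖⁻¹ := mul_one _
        _ ≤ 1 / M ^ d := by
            rw [one_div]
            exact inv_anti₀ hMd hcnorm
  · -- backward direction
    rintro ⟨A, hdeg, hb⟩
    set Q : MvPolynomial (Fin n) ℂ := ∑ k, MvPolynomial.X k * A k with hQdef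
    set P : MvPolynomial (Fin n) ℂ := C ((M:ℂ) ^ d) * (1 - Q) with hPdef
    have hMnorm : ‖(M:ℂ) ^ d‖ = M ^ d := by
      rw [norm_pow, Complex.norm_real, Real.norm_eq_abs, abs_of_nonneg (le_trans zero_le_one hM)]
    have hevalQ : ∀ z : Fin n → ℂ, eval z Q = ∑ k, z k * eval z (A k) := fun z => by
      rw [hQdef, map_sum]
      congr 1
      ext k
      rw [eval_mul, eval_X]
    have hPdeg : P.totalDegree ≤ d := by
      calc P.totalDegree ≤ (C ((M:ℂ)^d)).totalDegree + (1 - Q).totalDegree :=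
            totalDegree_mul _ _
        _ = (1 - Q).totalDegree := by rw [totalDegree_C, zero_add]
        _ ≤ max (1 : MvPolynomial (Fin n) ℂ).totalDegree Q.totalDegree := totalDegree_sub _ _
        _ ≤ d := by rw [totalDegree_one]; simp [hdeg]
    have hPb : ∀ z ∈ S, ‖eval z P‖ ≤ 1 := fun z hz => by
      rw [hPdef, eval_mul, eval_C, map_sub, map_one, hevalQ, norm_mul, hMnorm]
      calc M ^ d * ‖1 - ∑ k, z k * eval z (A k)‖ ≤ M ^ d * (1 / M ^ d) :=
            mul_le_mul_of_nonneg_left (hb z hz) (le_of_lt hMd)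
        _ = 1 := by field_simp
    have hP0 : ‖eval (fun _ => (0:ℂ)) P‖ = M ^ d := by
      have : eval (fun _ => (0:ℂ)) Q = 0 := by
        rw [hevalQ]
        simp
      rw [hPdef, eval_mul, eval_C, map_sub, map_one, this, sub_zero, mul_one, hMnorm]
    have hmemT : (M ^ d : ℝ) ∈ {r : ℝ | ∃ P : MvPolynomial (Fin n) ℂ,
        P.totalDegree ≤ d ∧ (∀ z ∈ S, ‖eval z P‖ ≤ 1) ∧
        r = ‖eval (fun _ => (0 : ℂ)) P‖} := ⟨P, hPdeg, hPb, hP0.symm⟩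
    have hbddT : BddAbove {r : ℝ | ∃ P : MvPolynomial (Fin n) ℂ,
        P.totalDegree ≤ d ∧ (∀ z ∈ S, ‖eval z P‖ ≤ 1) ∧
        r = ‖eval (fun _ => (0 : ℂ)) P‖} := by
      rw [hTeq]
      exact (hball.image hf).bddAbove
    have := le_csSup hbddT hmemT
    rwa [hsup] at this
end

section
/- Let V be a closed one-dimensional complex submanifold of ℂⁿ, K ⊆ V compact with K̂ ⊆ V, and suppose that on every connected component of V \ K, the extremal function Λ_K is either identically +∞ or locally bounded. Then K̂ is a closed subset of ℂⁿ. -/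
open MvPolynomial

/-- The extremal function Λ_K(x) = sup (1/d) log |P(x)| over d ≥ 1 and
polynomials P of degree ≤ d with sup_K |P| ≤ 1, with values in EReal.
The projective hull is K̂ = {x : Λ_K(x) < ∞}. -/
noncomputable def LamK (n : ℕ) (K : Set (Fin n → ℂ)) (x : Fin n → ℂ) : EReal :=
  ⨆ q : {q : ℕ × MvPolynomial (Fin n) ℂ // 1 ≤ q.1 ∧
      q.2.totalDegree ≤ q.1 ∧ ∀ w ∈ K, ‖eval w q.2‖ ≤ 1},
    (((1 : ℝ) / (q : ℕ × MvPolynomial (Fin n) ℂ).1 *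
      Real.log ‖eval x (q : ℕ × MvPolynomial (Fin n) ℂ).2‖ : ℝ) : EReal)

/-- On K itself the extremal function is at most 0. -/
lemma LamK_le_zero_of_mem {n : ℕ} {K : Set (Fin n → ℂ)} {x : Fin n → ℂ}
    (hx : x ∈ K) : LamK n K x ≤ 0 := by
  refine iSup_le fun q => ?_
  have h1 : ‖eval x (q : ℕ × MvPolynomial (Fin n) ℂ).2‖ ≤ 1 := q.prop.2.2 x hx
  have hlog : Real.log ‖eval x (q : ℕ × MvPolynomial (Fin n) ℂ).2‖ ≤ 0 :=
    Real.log_nonpos (norm_nonneg _) h1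
  have hpos : (0 : ℝ) ≤ 1 / (q : ℕ × MvPolynomial (Fin n) ℂ).1 := by positivity
  have : (1 : ℝ) / (q : ℕ × MvPolynomial (Fin n) ℂ).1 *
      Real.log ‖eval x (q : ℕ × MvPolynomial (Fin n) ℂ).2‖ ≤ 0 :=
    mul_nonpos_of_nonneg_of_nonpos hpos hlog
  exact_mod_cast EReal.coe_le_coe_iff.mpr this

/-- If V ⊆ ℂⁿ is a closed one-dimensional complex submanifold, K ⊆ V compact
with K̂ = {Λ_K < ∞} ⊆ V, and on every connected component of V \ K the
extremal function Λ_K is identically +∞ or locally bounded, then K̂ is closed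
in ℂⁿ. -/
theorem stmt_13 (n : ℕ) (V : Set (Fin n → ℂ)) (hVc : IsClosed V)
    (hman : ∀ z ∈ V, ∃ U : Set (Fin n → ℂ), IsOpen U ∧ z ∈ U ∧
      ∃ (g : ℂ → (Fin n → ℂ)) (W : Set ℂ), IsOpen W ∧
        AnalyticOnNhd ℂ g W ∧ Set.InjOn g W ∧ g '' W = V ∩ U ∧
        ∀ s ⊆ W, IsOpen s → ∃ u : Set (Fin n → ℂ), IsOpen u ∧ g '' s = V ∩ u)
    (K : Set (Fin n → ℂ)) (hK : IsCompact K) (hKV : K ⊆ V)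
    (hhull : {x | LamK n K x ≠ ⊤} ⊆ V)
    (hcomp : ∀ x ∈ V \ K,
      (∀ y ∈ connectedComponentIn (V \ K) x, LamK n K y = ⊤) ∨
      (∀ y ∈ connectedComponentIn (V \ K) x, ∃ U ∈ nhds y, ∃ B : ℝ,
        ∀ w ∈ U ∩ connectedComponentIn (V \ K) x, LamK n K w ≤ (B : EReal))) :
    IsClosed {x | LamK n K x ≠ ⊤} := by
  apply isClosed_of_closure_subset
  intro x hx
  have hxV : x ∈ V := hVc.closure_subset (closure_mono hhull hx)
  by_cases hxK : x ∈ K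
  · -- x ∈ K : Λ_K x ≤ 0 < ⊤
    have := LamK_le_zero_of_mem hxK
    exact (lt_of_le_of_lt this (by norm_num)).ne
  · have hxVK : x ∈ V \ K := ⟨hxV, hxK⟩
    rcases hcomp x hxVK with htop | hbd
    · -- Λ_K ≡ ⊤ on the component of x : contradiction with x ∈ closure K̂
      exfalso
      obtain ⟨U, hUo, hxU, g, W, hWo, hg, hginj, hgW, himg⟩ := hman x hxV
      have hxVU : x ∈ g '' W := hgW ▸ ⟨hxV, hxU⟩
      obtain ⟨w0, hw0W, hgw0⟩ := hxVU
      -- T = {w ∈ W | g w ∉ K} is open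
      set T : Set ℂ := {w | w ∈ W ∧ g w ∉ K} with hT
      have hTo : IsOpen T := by
        rw [isOpen_iff_mem_nhds]
        rintro w ⟨hwW, hwK⟩
        have hc : ContinuousAt g w := (hg w hwW).continuousAt
        have h1 : g ⁻¹' Kᶜ ∈ nhds w :=
          hc.preimage_mem_nhds (hK.isClosed.isOpen_compl.mem_nhds hwK)
        exact Filter.mem_of_superset (Filter.inter_mem (hWo.mem_nhds hwW) h1)
          (fun z hz => ⟨hz.1, hz.2⟩)
      have hw0T : w0 ∈ T := ⟨hw0W, by rw [hgw0]; exact hxK⟩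
      -- connected open nbhd s of w0 inside T
      obtain ⟨s, hsT, hso, hw0s, hsconn⟩ :=
        locallyConnectedSpace_iff_subsets_isOpen_isConnected.mp inferInstance w0 T
          (hTo.mem_nhds hw0T)
      have hsW : s ⊆ W := fun z hz => (hsT hz).1
      obtain ⟨u, huo, hgs⟩ := himg s hsW hso
      -- g '' s is connected and contained in V \ K, containing x
      have hcont : ContinuousOn g s := fun z hz =>
        ((hg z (hsW hz)).continuousAt).continuousWithinAt
      have hgsconn : IsPreconnected (g '' s) :=
        hsconn.isPreconnected.image g hcont
      have hgsVK : g '' s ⊆ V \ K := by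
        rintro _ ⟨z, hz, rfl⟩
        exact ⟨(hgs ▸ (Set.mem_image_of_mem g hz) : g z ∈ V ∩ u).1, (hsT hz).2⟩
      have hxgs : x ∈ g '' s := ⟨w0, hw0s, hgw0⟩
      have hsub : g '' s ⊆ connectedComponentIn (V \ K) x :=
        hgsconn.subset_connectedComponentIn hxgs hgsVK
      -- u is a neighborhood of x meeting K̂
      have hxu : x ∈ u := (hgs ▸ hxgs : x ∈ V ∩ u).2
      obtain ⟨y, hyu, hyK⟩ := mem_closure_iff_nhds.mp hx u (huo.mem_nhds hxu)
      have hyV : y ∈ V := hhull hyK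
      have hygs : y ∈ g '' s := hgs ▸ ⟨hyV, hyu⟩
      exact hyK (htop y (hsub hygs))
    · -- locally bounded case
      obtain ⟨U, hU, B, hB⟩ := hbd x (mem_connectedComponentIn hxVK)
      have := hB x ⟨mem_of_mem_nhds hU, mem_connectedComponentIn hxVK⟩
      exact (lt_of_le_of_lt this (EReal.coe_lt_top B)).ne
end
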